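/- Let R be a noetherian F-finite normal integral domain of prime characteristic p and let 𝔭 ⊆ R be a prime ideal of height 1. Then R is purely F-regular along 𝔭 if and only if both of the following hold: (i) for every prime ideal q of R containing 𝔭, the localization R_q is purely F-regular along 𝔭R_q; and (ii) for every prime ideal q of R not containing 𝔭, the localization R_q is strongly F-regular. -/

import Mathlib

/-- `φ` is a `p^e`-linear map: an additive map with `φ (a^(p^e) * b) = a * φ b`. -/
def IsPLinearMap (p e : ℕ) {R : Type*} [CommRing R] (φ : R →+ R) : Prop :=
  ∀ a b : R, φ (a ^ p ^ e * b) = a * φ b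

/-- `R` is purely `F`-regular along the ideal `q`: for every `c ∉ q` there are `e ≥ 1` and a
`p^e`-linear map `φ` with `φ q ⊆ q` and `φ c = 1`. -/
def PurelyFRegularAlong (p : ℕ) {R : Type*} [CommRing R] (q : Ideal R) : Prop :=
  ∀ c : R, c ∉ q → ∃ e : ℕ, 1 ≤ e ∧ ∃ φ : R →+ R,
    IsPLinearMap p e φ ∧ (∀ x ∈ q, φ x ∈ q) ∧ φ c = 1

/-- `R` is F-finite: `R` is a finitely generated module over its subring of `p`-th powers,
i.e. there is a finite set spanning `R` with coefficients that are `p`-th powers. -/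
def FFinite (p : ℕ) (R : Type*) [CommRing R] : Prop :=
  ∃ s : Finset R, ∀ x : R, ∃ c : R → R, x = ∑ y ∈ s, (c y) ^ p * y

/-- A prime ideal of height one: a nonzero prime admitting no prime strictly between it and
the zero ideal. -/
def IsHeightOnePrime {R : Type*} [CommRing R] (𝔭 : Ideal R) : Prop :=
  𝔭.IsPrime ∧ 𝔭 ≠ ⊥ ∧ ∀ q : Ideal R, q.IsPrime → q < 𝔭 → q = ⊥

/-- A ring of characteristic `p` is strongly F-regular if every nonzero element is sent
to `1` by some `p^e`-linear map. -/
def StronglyFRegular (p : ℕ) (R : Type*) [CommRing R] : Prop :=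
  ∀ c : R, c ≠ 0 → ∃ e : ℕ, 1 ≤ e ∧ ∃ φ : R →+ R, IsPLinearMap p e φ ∧ φ c = 1

namespace PF


variable {p e f : ℕ} {R : Type*} [CommRing R]

theorem pl_zero : IsPLinearMap p e (0 : R →+ R) := fun a b => by simp

theorem pl_add {φ ψ : R →+ R} (hφ : IsPLinearMap p e φ) (hψ : IsPLinearMap p e ψ) :
    IsPLinearMap p e (φ + ψ) := fun a b => by
  simp [hφ a b, hψ a b, mul_add]

theorem pl_mulLeft_comp (r : R) {φ : R →+ R} (hφ : IsPLinearMap p e φ) :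
    IsPLinearMap p e ((AddMonoidHom.mulLeft r).comp φ) := fun a b => by
  simp only [AddMonoidHom.coe_comp, AddMonoidHom.coe_mulLeft, Function.comp_apply, hφ a b]
  ring

theorem pl_comp_mulLeft (r : R) {φ : R →+ R} (hφ : IsPLinearMap p e φ) :
    IsPLinearMap p e (φ.comp (AddMonoidHom.mulLeft r)) := fun a b => by
  simp only [AddMonoidHom.coe_comp, AddMonoidHom.coe_mulLeft, Function.comp_apply]
  rw [← mul_assoc, mul_comm r, mul_assoc, hφ a (r * b)]

theorem pl_comp {φ ψ : R →+ R} (hφ : IsPLinearMap p e φ) (hψ : IsPLinearMap p f ψ) :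
    IsPLinearMap p (e + f) (φ.comp ψ) := fun a b => by
  have h : a ^ p ^ (e + f) = (a ^ p ^ e) ^ p ^ f := by rw [← pow_mul, pow_add]
  simp only [AddMonoidHom.coe_comp, Function.comp_apply, h, hψ (a ^ p ^ e) b, hφ a (ψ b)]

/-- level lowering by precomposition with a Frobenius power -/
theorem pl_comp_frob [Fact p.Prime] [CharP R p] {φ : R →+ R} (hφ : IsPLinearMap p e φ)
    (k : ℕ) (hk : f + k = e) :
    IsPLinearMap p f (φ.comp (iterateFrobenius R p k).toAddMonoidHom) := fun a b => by
  have : (a ^ p ^ f * b) ^ p ^ k = a ^ p ^ e * b ^ p ^ k := by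
    rw [mul_pow, ← pow_mul, ← pow_add, hk]
  simp only [AddMonoidHom.coe_comp, Function.comp_apply, RingHom.toAddMonoidHom_eq_coe,
    AddMonoidHom.coe_coe, iterateFrobenius_def, this, hφ a (b ^ p ^ k)]

/-- The ideal of values `φ c` over all `p^e`-linear maps compatible with `𝔮`. -/
def splitIdeal (p e : ℕ) (𝔮 : Ideal R) (c : R) : Ideal R where
  carrier := {x | ∃ φ : R →+ R, IsPLinearMap p e φ ∧ (∀ y ∈ 𝔮, φ y ∈ 𝔮) ∧ φ c = x}
  add_mem' := by
    rintro a b ⟨φ, hφ, hc, rfl⟩ ⟨ψ, hψ, hc', rfl⟩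
    exact ⟨φ + ψ, pl_add hφ hψ, fun y hy => Ideal.add_mem _ (hc y hy) (hc' y hy), rfl⟩
  zero_mem' := ⟨0, pl_zero, by simp, rfl⟩
  smul_mem' := by
    rintro r x ⟨φ, hφ, hc, rfl⟩
    exact ⟨(AddMonoidHom.mulLeft r).comp φ, pl_mulLeft_comp r hφ,
      fun y hy => Ideal.mul_mem_left _ r (hc y hy), rfl⟩

theorem mem_splitIdeal {𝔮 : Ideal R} {c x : R} :
    x ∈ splitIdeal p e 𝔮 c ↔
      ∃ φ : R →+ R, IsPLinearMap p e φ ∧ (∀ y ∈ 𝔮, φ y ∈ 𝔮) ∧ φ c = x := Iff.rfl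



/-- Type synonym: `R` as a module over itself via the `e`-th Frobenius power. -/
def FM (p e : ℕ) (R : Type*) : Type _ := R

section FM
variable (p e : ℕ) (R : Type*)

/-- The identity, seen as a map `R → FM p e R`. -/
def FM.mk : R → FM p e R := id

/-- The identity, seen as a map `FM p e R → R`. -/
def FM.un : FM p e R → R := id

instance [CommRing R] : AddCommGroup (FM p e R) := inferInstanceAs (AddCommGroup R)

variable [CommRing R] [Fact p.Prime] [CharP R p]

instance : Module R (FM p e R) := Module.compHom R (iterateFrobenius R p e)

theorem FM.smul_def (r x : R) : r • FM.mk p e R x = FM.mk p e R (r ^ p ^ e * x) := rfl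

variable {p e R}

/-- A `p^e`-linear map as a linear map on `FM`. -/
def FM.ofPLinear (φ : R →+ R) (hφ : IsPLinearMap p e φ) : FM p e R →ₗ[R] R where
  toFun := fun x => φ x
  map_add' := φ.map_add
  map_smul' := fun r x => hφ r x

@[simp] theorem FM.ofPLinear_apply (φ : R →+ R) (hφ : IsPLinearMap p e φ) (x : R) :
    FM.ofPLinear φ hφ (FM.mk p e R x) = φ x := rfl

/-- A linear map on `FM` as a `p^e`-linear map. -/
def FM.toPLinear (l : FM p e R →ₗ[R] R) : R →+ R :=
  AddMonoidHom.mk' (fun x => l (FM.mk p e R x)) (fun a b => l.map_add a b)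

theorem FM.toPLinear_apply (l : FM p e R →ₗ[R] R) (x : R) :
    FM.toPLinear l x = l (FM.mk p e R x) := rfl

theorem FM.toPLinear_is (l : FM p e R →ₗ[R] R) : IsPLinearMap p e (FM.toPLinear l) :=
  fun a b => l.map_smul a (FM.mk p e R b)

end FM

section Fin
universe u
variable {p e : ℕ} {R : Type u} [CommRing R] [Fact p.Prime] [CharP R p]

theorem ffinite_level (hff : FFinite p R) (e : ℕ) :
    ∃ (ι : Type u) (_ : Fintype ι) (v : ι → R), ∀ x : R, ∃ c : ι → R,
      x = ∑ i, (c i) ^ p ^ e * v i := by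
  obtain ⟨s, hs⟩ := hff
  induction e with
  | zero =>
    exact ⟨PUnit, inferInstance, fun _ => 1, fun x => ⟨fun _ => x, by simp⟩⟩
  | succ e ih =>
    obtain ⟨ι, _, v, hv⟩ := ih
    refine ⟨ι × ↥s, inferInstance, fun iz => (iz.2 : R) ^ p ^ e * v iz.1, fun x => ?_⟩
    obtain ⟨c, hc⟩ := hv x
    choose d hd using fun i => hs (c i)
    refine ⟨fun iz => d iz.1 iz.2, ?_⟩
    calc x = ∑ i, (c i) ^ p ^ e * v i := hc
    _ = ∑ i, ∑ z ∈ s, ((d i z) ^ p ^ (e + 1) * (z ^ p ^ e * v i)) := by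
        refine Finset.sum_congr rfl fun i _ => ?_
        rw [hd i, ← iterateFrobenius_def (R := R) (p := p) (n := e),
          map_sum (iterateFrobenius R p e) _ s, Finset.sum_mul]
        refine Finset.sum_congr rfl fun z _ => ?_
        rw [iterateFrobenius_def, mul_pow, ← pow_mul, ← pow_succ']
        ring
    _ = ∑ iz : ι × ↥s, (d iz.1 iz.2) ^ p ^ (e + 1) * ((iz.2 : R) ^ p ^ e * v iz.1) := by
        rw [Fintype.sum_prod_type]
        exact Finset.sum_congr rfl fun i _ => (Finset.sum_attach s _).symm

theorem fm_finite (hff : FFinite p R) (e : ℕ) : Module.Finite R (FM p e R) := by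
  obtain ⟨ι, _, v, hv⟩ := ffinite_level hff e
  rw [Module.finite_def, Submodule.fg_def]
  refine ⟨Set.range (fun i => FM.mk p e R (v i)), Set.finite_range _, ?_⟩
  rw [Submodule.eq_top_iff']
  intro x
  obtain ⟨c, hc⟩ := hv x
  have hx : x = ∑ i, c i • FM.mk p e R (v i) := hc
  rw [hx]
  exact Submodule.sum_mem _ fun i _ =>
    Submodule.smul_mem _ _ (Submodule.subset_span (Set.mem_range_self i))

end Fin
/-- Type synonym: `A` as a module over `A` and `R` via the `e`-th Frobenius power. -/
def FMA (p e : ℕ) (R A : Type*) : Type _ := A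

section FMA
variable (p e : ℕ) (R A : Type*)

/-- Identity map into the synonym. -/
def FMA.mk : A → FMA p e R A := id
/-- Identity map out of the synonym. -/
def FMA.un : FMA p e R A → A := id

@[simp] theorem FMA.un_mk (x : A) : FMA.un p e R A (FMA.mk p e R A x) = x := rfl
@[simp] theorem FMA.mk_un (x : FMA p e R A) : FMA.mk p e R A (FMA.un p e R A x) = x := rfl

instance [CommRing A] : AddCommGroup (FMA p e R A) := inferInstanceAs (AddCommGroup A)

variable [CommRing R] [CommRing A] [Algebra R A] [Fact p.Prime] [CharP A p]

instance : Module A (FMA p e R A) := Module.compHom A (iterateFrobenius A p e)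
instance : Module R (FMA p e R A) :=
  Module.compHom A ((iterateFrobenius A p e).comp (algebraMap R A))

theorem FMA.smul_def (a x : A) :
    a • FMA.mk p e R A x = FMA.mk p e R A (a ^ p ^ e * x) := rfl
theorem FMA.rsmul_def (r : R) (x : A) :
    r • FMA.mk p e R A x = FMA.mk p e R A ((algebraMap R A r) ^ p ^ e * x) := rfl

instance : IsScalarTower R A (FMA p e R A) := ⟨fun r a x => by
  show FMA.mk p e R A ((r • a : A) ^ p ^ e * FMA.un p e R A x) =
    FMA.mk p e R A ((algebraMap R A r) ^ p ^ e * (a ^ p ^ e * FMA.un p e R A x))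
  rw [Algebra.smul_def, mul_pow, mul_assoc]⟩

variable {p e R A}

/-- A `p^e`-linear map on `A` as an `A`-linear map on `FMA`. -/
def FMA.ofPLinear (ψ : A →+ A) (hψ : IsPLinearMap p e ψ) : FMA p e R A →ₗ[A] A where
  toFun := fun x => ψ (FMA.un p e R A x)
  map_add' := fun a b => ψ.map_add (FMA.un p e R A a) (FMA.un p e R A b)
  map_smul' := fun a x => hψ a (FMA.un p e R A x)

@[simp] theorem FMA.ofPLinear_apply (ψ : A →+ A) (hψ : IsPLinearMap p e ψ) (x : A) :
    FMA.ofPLinear (R := R) ψ hψ (FMA.mk p e R A x) = ψ x := rfl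

/-- An `A`-linear map on `FMA` as a `p^e`-linear map on `A`. -/
def FMA.toPLinear (L : FMA p e R A →ₗ[A] A) : A →+ A :=
  AddMonoidHom.mk' (fun x => L (FMA.mk p e R A x)) (fun a b => L.map_add _ _)

theorem FMA.toPLinear_apply (L : FMA p e R A →ₗ[A] A) (x : A) :
    FMA.toPLinear L x = L (FMA.mk p e R A x) := rfl

theorem FMA.toPLinear_is (L : FMA p e R A →ₗ[A] A) : IsPLinearMap p e (FMA.toPLinear L) :=
  fun a b => L.map_smul a (FMA.mk p e R A b)

end FMA

section Loc
variable (p e : ℕ) {R : Type*} (A : Type*) [CommRing R] [CommRing A] [Algebra R A]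
  [Fact p.Prime] [CharP R p] [CharP A p] (S : Submonoid R) [IsLocalization S A]

/-- The localization map `FM p e R → FMA p e R A`. -/
def locMap : FM p e R →ₗ[R] FMA p e R A where
  toFun := fun x => FMA.mk p e R A (algebraMap R A (FM.un p e R x))
  map_add' := fun a b => by
    show FMA.mk p e R A (algebraMap R A (FM.un p e R a + FM.un p e R b)) = _
    rw [map_add]; rfl
  map_smul' := fun r x => by
    show FMA.mk p e R A (algebraMap R A (r ^ p ^ e * FM.un p e R x)) =
      FMA.mk p e R A ((algebraMap R A r) ^ p ^ e * algebraMap R A (FM.un p e R x))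
    rw [map_mul, map_pow]

theorem locMap_apply (x : R) :
    locMap p e A (FM.mk p e R x) = FMA.mk p e R A (algebraMap R A x) := rfl

instance isLocalizedModule : IsLocalizedModule S (locMap p e A (R := R)) := by
  have hp : p.Prime := Fact.out
  have h1 : p ^ e - 1 + 1 = p ^ e := Nat.succ_pred_eq_of_pos (pow_pos hp.pos e)
  constructor
  · intro s
    rw [Module.End.isUnit_iff]
    have hu : IsUnit ((algebraMap R A s) ^ p ^ e) := (IsLocalization.map_units A s).pow _
    constructor
    · intro z w h
      have h' : (algebraMap R A (s : R)) ^ p ^ e * FMA.un p e R A z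
          = (algebraMap R A (s : R)) ^ p ^ e * FMA.un p e R A w := congrArg (FMA.un p e R A) h
      exact congrArg (FMA.mk p e R A) (hu.mul_left_cancel h') |>.trans (FMA.mk_un p e R A w)
        |> fun h'' => ((FMA.mk_un p e R A z).symm.trans h'')
    · intro z
      refine ⟨FMA.mk p e R A (↑hu.unit⁻¹ * FMA.un p e R A z), ?_⟩
      show FMA.mk p e R A ((algebraMap R A (s : R)) ^ p ^ e * (↑hu.unit⁻¹ * FMA.un p e R A z))
        = z
      rw [← mul_assoc, IsUnit.mul_val_inv, one_mul, FMA.mk_un]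
  · intro z
    obtain ⟨⟨a, s⟩, h⟩ := IsLocalization.surj (M := S) (FMA.un p e R A z)
    refine ⟨(FM.mk p e R ((s : R) ^ (p ^ e - 1) * a), s), ?_⟩
    show FMA.mk p e R A ((algebraMap R A (s : R)) ^ p ^ e * FMA.un p e R A z) =
      FMA.mk p e R A (algebraMap R A ((s : R) ^ (p ^ e - 1) * a))
    rw [map_mul, map_pow]
    conv_lhs => rw [← h1, pow_succ]
    rw [mul_assoc, mul_comm (algebraMap R A (s : R)) (FMA.un p e R A z), h]
  · intro x y hxy
    have h : algebraMap R A (FM.un p e R x) = algebraMap R A (FM.un p e R y) :=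
      congrArg (FMA.un p e R A) hxy
    obtain ⟨c, hc⟩ := IsLocalization.exists_of_eq (M := S) (S := A) h
    refine ⟨c, ?_⟩
    show FM.mk p e R ((c : R) ^ p ^ e * FM.un p e R x) =
      FM.mk p e R ((c : R) ^ p ^ e * FM.un p e R y)
    conv_lhs => rw [← h1, pow_succ]
    conv_rhs => rw [← h1, pow_succ]
    rw [mul_assoc, mul_assoc, hc]

end Loc

section Hom
variable (p e : ℕ) {R : Type*} (A : Type*) [CommRing R] [CommRing A] [Algebra R A]
  [Fact p.Prime] [CharP R p] [CharP A p] (S : Submonoid R) [IsLocalization S A]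
  [IsNoetherianRing R]

theorem map_key (l : FM p e R →ₗ[R] R) (m : FM p e R) :
    (IsLocalizedModule.mapExtendScalars S (locMap p e A (R := R)) (Algebra.linearMap R A) A
      l) (locMap p e A m) = algebraMap R A (l m) := by
  show (IsLocalizedModule.map S (locMap p e A (R := R)) (Algebra.linearMap R A) l)
    (locMap p e A m) = _
  rw [IsLocalizedModule.map_apply]
  rfl

include S in
/-- Localizing a `p^e`-linear map. -/
theorem exists_localized (φ : R →+ R) (hφ : IsPLinearMap p e φ) :
    ∃ ψ : A →+ A, IsPLinearMap p e ψ ∧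
      ∀ x : R, ψ (algebraMap R A x) = algebraMap R A (φ x) := by
  let E := IsLocalizedModule.mapExtendScalars S (locMap p e A (R := R)) (Algebra.linearMap R A) A
  refine ⟨FMA.toPLinear (E (FM.ofPLinear φ hφ)), FMA.toPLinear_is _, fun x => ?_⟩
  rw [FMA.toPLinear_apply]
  have h0 : FMA.mk p e R A (algebraMap R A x) = locMap p e A (FM.mk p e R x) := rfl
  rw [h0, map_key p e A S]
  rfl

/-- Descending a `p^e`-linear map up to a unit denominator. -/
theorem exists_descent (hff : FFinite p R) (ψ : A →+ A) (hψ : IsPLinearMap p e ψ) :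
    ∃ (φ : R →+ R) (s : R), s ∈ S ∧ IsPLinearMap p e φ ∧
      ∀ x : R, algebraMap R A (φ x) = algebraMap R A s * ψ (algebraMap R A x) := by
  haveI := fm_finite (R := R) hff e
  haveI : Module.FinitePresentation R (FM p e R) := Module.finitePresentation_of_finite _ _
  let E := IsLocalizedModule.mapExtendScalars S (locMap p e A (R := R)) (Algebra.linearMap R A) A
  obtain ⟨⟨l, s⟩, hl⟩ := IsLocalizedModule.surj S E (FMA.ofPLinear (R := R) ψ hψ)
  refine ⟨FM.toPLinear l, s, s.2, FM.toPLinear_is l, fun x => ?_⟩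
  have h2 := congrArg (fun (L : FMA p e R A →ₗ[A] A) => L (locMap p e A (FM.mk p e R x))) hl
  simp only at h2
  rw [map_key p e A S] at h2
  rw [FM.toPLinear_apply, ← h2, LinearMap.smul_apply]
  have h3 : locMap p e A (FM.mk p e R x) = FMA.mk p e R A (algebraMap R A x) := rfl
  rw [h3, FMA.ofPLinear_apply, Submonoid.smul_def, Algebra.smul_def]

end Hom

section AtPrime
variable {p : ℕ} [Fact p.Prime] {R : Type*} [CommRing R] [IsDomain R] [CharP R p]
  [IsNoetherianRing R] (q : Ideal R) [q.IsPrime]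

instance : CharP (Localization.AtPrime q) p :=
  charP_of_injective_ringHom
    (IsLocalization.injective (Localization.AtPrime q) q.primeCompl_le_nonZeroDivisors) p

instance : IsDomain (Localization.AtPrime q) :=
  IsLocalization.isDomain_localization q.primeCompl_le_nonZeroDivisors

variable {q}
variable {e : ℕ} {𝔭 : Ideal R}

/-- (Localization.AtPrime q) localized map is compatible with the localized ideal. -/
theorem localized_compat {φ : R →+ R} {ψ : Localization.AtPrime q →+ Localization.AtPrime q}
    (hψ : IsPLinearMap p e ψ)
    (hcomm : ∀ x : R, ψ (algebraMap R (Localization.AtPrime q) x)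
      = algebraMap R (Localization.AtPrime q) (φ x))
    (hφ𝔭 : ∀ y ∈ 𝔭, φ y ∈ 𝔭) :
    ∀ z ∈ 𝔭.map (algebraMap R (Localization.AtPrime q)),
      ψ z ∈ 𝔭.map (algebraMap R (Localization.AtPrime q)) := by
  intro z hz
  have hp : p.Prime := Fact.out
  have h1 : p ^ e - 1 + 1 = p ^ e := Nat.succ_pred_eq_of_pos (pow_pos hp.pos e)
  obtain ⟨⟨⟨x, hx⟩, s⟩, hzs⟩ :=
    (IsLocalization.mem_map_algebraMap_iff q.primeCompl (Localization.AtPrime q)).mp hz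
  simp only at hzs
  have key : (algebraMap R (Localization.AtPrime q) (s : R)) ^ p ^ e * z = algebraMap R (Localization.AtPrime q) ((s : R) ^ (p ^ e - 1) * x) := by
    rw [map_mul, map_pow]
    conv_lhs => rw [← h1, pow_succ]
    rw [mul_assoc, mul_comm (algebraMap R (Localization.AtPrime q) (s : R)) z, hzs]
  have h2 : algebraMap R (Localization.AtPrime q) (s : R) * ψ z = algebraMap R (Localization.AtPrime q) (φ ((s : R) ^ (p ^ e - 1) * x)) := by
    rw [← hcomm, ← key, hψ (algebraMap R (Localization.AtPrime q) (s : R)) z]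
  have h3 : algebraMap R (Localization.AtPrime q) (s : R) * ψ z ∈ 𝔭.map (algebraMap R (Localization.AtPrime q)) := by
    rw [h2]
    exact Ideal.mem_map_of_mem _ (hφ𝔭 _ (Ideal.mul_mem_left _ _ hx))
  have hu : IsUnit (algebraMap R (Localization.AtPrime q) (s : R)) := IsLocalization.map_units (Localization.AtPrime q) s
  have h4 : ψ z = ↑hu.unit⁻¹ * (algebraMap R (Localization.AtPrime q) (s : R) * ψ z) := by
    rw [← mul_assoc, IsUnit.val_inv_mul, one_mul]
  rw [h4]
  exact Ideal.mul_mem_left _ _ h3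

/-- Descent of a local splitting, case `𝔭 ≤ q`. -/
theorem descend_le (hff : FFinite p R) (h𝔭p : 𝔭.IsPrime) (hle : 𝔭 ≤ q) (c : R)
    {ψ : Localization.AtPrime q →+ Localization.AtPrime q} (hψ : IsPLinearMap p e ψ)
    (hψc : ψ (algebraMap R (Localization.AtPrime q) c) = 1)
    (hcompat : ∀ z ∈ 𝔭.map (algebraMap R (Localization.AtPrime q)),
      ψ z ∈ 𝔭.map (algebraMap R (Localization.AtPrime q))) :
    ∃ φ : R →+ R, IsPLinearMap p e φ ∧ (∀ y ∈ 𝔭, φ y ∈ 𝔭) ∧ φ c ∉ q := by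
  obtain ⟨φ, s, hs, hφ, hval⟩ := exists_descent p e (Localization.AtPrime q) q.primeCompl hff ψ hψ
  have hdisj : Disjoint (q.primeCompl : Set R) (𝔭 : Set R) :=
    Set.disjoint_left.mpr fun a ha ha' => ha (hle ha')
  have hcomap : Ideal.comap (algebraMap R (Localization.AtPrime q)) (𝔭.map (algebraMap R (Localization.AtPrime q))) = 𝔭 := IsLocalization.comap_map_of_isPrime_disjoint q.primeCompl (Localization.AtPrime q) h𝔭p hdisj
  refine ⟨φ, hφ, fun y hy => ?_, ?_⟩
  · have : algebraMap R (Localization.AtPrime q) (φ y) ∈ 𝔭.map (algebraMap R (Localization.AtPrime q)) := by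
      rw [hval y]
      exact Ideal.mul_mem_left _ _ (hcompat _ (Ideal.mem_map_of_mem _ hy))
    have := Ideal.mem_comap.mpr this
    rwa [hcomap] at this
  · have : algebraMap R (Localization.AtPrime q) (φ c) = algebraMap R (Localization.AtPrime q) s := by rw [hval c, hψc, mul_one]
    have hinj := IsLocalization.injective (Localization.AtPrime q) q.primeCompl_le_nonZeroDivisors
    rw [hinj this]
    exact hs

/-- Descent of a local splitting, case `¬ 𝔭 ≤ q`. -/
theorem descend_nle (hff : FFinite p R) (c : R) {t : R} (ht𝔭 : t ∈ 𝔭) (htq : t ∉ q)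
    {ψ : Localization.AtPrime q →+ Localization.AtPrime q} (hψ : IsPLinearMap p e ψ)
    (hψc : ψ (algebraMap R (Localization.AtPrime q) c) = 1) :
    ∃ φ : R →+ R, IsPLinearMap p e φ ∧ (∀ y ∈ 𝔭, φ y ∈ 𝔭) ∧ φ c ∉ q := by
  obtain ⟨φ', s, hs, hφ', hval⟩ := exists_descent p e (Localization.AtPrime q) q.primeCompl hff ψ hψ
  refine ⟨(AddMonoidHom.mulLeft t).comp φ', pl_mulLeft_comp t hφ', fun y hy => ?_, ?_⟩
  · exact Ideal.mul_mem_right _ _ ht𝔭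
  · have : algebraMap R (Localization.AtPrime q) (φ' c) = algebraMap R (Localization.AtPrime q) s := by rw [hval c, hψc, mul_one]
    have hinj := IsLocalization.injective (Localization.AtPrime q) q.primeCompl_le_nonZeroDivisors
    have hc : φ' c = s := hinj this
    show t * φ' c ∉ q
    rw [hc]
    intro hmem
    rcases ‹q.IsPrime›.mem_or_mem hmem with h | h
    · exact htq h
    · exact hs h

end AtPrime

section DVR
variable {p : ℕ} {R : Type*} [CommRing R] [IsDomain R] [IsNoetherianRing R]
  [IsIntegrallyClosed R] {𝔭 : Ideal R}

theorem dvr_factor (h𝔭 : 𝔭.IsPrime ∧ 𝔭 ≠ ⊥ ∧ ∀ q : Ideal R, q.IsPrime → q < 𝔭 → q = ⊥)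
    {x t : R} (hx : x ≠ 0) (ht : t ∈ 𝔭) (ht0 : t ≠ 0) :
    ∃ (m n : ℕ) (c₁ c₂ : R), 1 ≤ m ∧ c₂ ∉ 𝔭 ∧ x ^ m * c₁ = t ^ n * c₂ := by
  obtain ⟨h𝔭p, h𝔭0, h𝔭ht⟩ := h𝔭
  haveI := h𝔭p
  haveI : IsDomain (Localization.AtPrime 𝔭) :=
    IsLocalization.isDomain_localization 𝔭.primeCompl_le_nonZeroDivisors
  haveI : IsNoetherianRing (Localization.AtPrime 𝔭) :=
    IsLocalization.isNoetherianRing 𝔭.primeCompl (Localization.AtPrime 𝔭) inferInstance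
  haveI : IsIntegrallyClosed (Localization.AtPrime 𝔭) :=
    isIntegrallyClosed_of_isLocalization (S := Localization.AtPrime 𝔭) 𝔭.primeCompl
      𝔭.primeCompl_le_nonZeroDivisors
  have hinj := IsLocalization.injective (Localization.AtPrime 𝔭)
    𝔭.primeCompl_le_nonZeroDivisors
  have hmax : Ideal.map (algebraMap R (Localization.AtPrime 𝔭)) 𝔭
      = IsLocalRing.maximalIdeal (Localization.AtPrime 𝔭) :=
    Localization.AtPrime.map_eq_maximalIdeal
  have htmem : algebraMap R (Localization.AtPrime 𝔭) t ∈
      IsLocalRing.maximalIdeal (Localization.AtPrime 𝔭) :=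
    hmax ▸ Ideal.mem_map_of_mem _ ht
  have htb : algebraMap R (Localization.AtPrime 𝔭) t ≠ 0 := fun h0 =>
    ht0 (hinj (by rw [h0, map_zero]))
  have hxb : algebraMap R (Localization.AtPrime 𝔭) x ≠ 0 := fun h0 =>
    hx (hinj (by rw [h0, map_zero]))
  have hmaxne : IsLocalRing.maximalIdeal (Localization.AtPrime 𝔭) ≠ ⊥ := fun hbot => by
    rw [hbot] at htmem
    exact htb htmem
  have hnf : ¬ IsField (Localization.AtPrime 𝔭) := fun hf =>
    hmaxne (IsLocalRing.isField_iff_maximalIdeal_eq.mp hf)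
  have huniq : ∀ P : Ideal (Localization.AtPrime 𝔭), P ≠ ⊥ ∧ P.IsPrime →
      P = IsLocalRing.maximalIdeal (Localization.AtPrime 𝔭) := by
    rintro P ⟨hP0, hPp⟩
    have hPle : P ≤ IsLocalRing.maximalIdeal (Localization.AtPrime 𝔭) :=
      IsLocalRing.le_maximalIdeal hPp.ne_top
    have hcle : P.comap (algebraMap R (Localization.AtPrime 𝔭)) ≤ 𝔭 :=
      le_trans (Ideal.comap_mono hPle) (le_of_eq Localization.AtPrime.comap_maximalIdeal)
    haveI : (P.comap (algebraMap R (Localization.AtPrime 𝔭))).IsPrime :=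
      Ideal.IsPrime.comap _
    have hPmap : Ideal.map (algebraMap R (Localization.AtPrime 𝔭)) (Ideal.comap (algebraMap R (Localization.AtPrime 𝔭)) P) = P := IsLocalization.map_comap 𝔭.primeCompl (Localization.AtPrime 𝔭) P
    rcases lt_or_eq_of_le hcle with hlt | heq
    · have hbot := h𝔭ht _ inferInstance hlt
      rw [hbot, Ideal.map_bot] at hPmap
      exact absurd hPmap.symm hP0
    · rw [← hPmap, heq, hmax]
  haveI hdvr : IsDiscreteValuationRing (Localization.AtPrime 𝔭) := by
    have tf := (IsDiscreteValuationRing.TFAE (Localization.AtPrime 𝔭) hnf).out 0 3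
    refine tf.mpr ⟨inferInstance, IsLocalRing.maximalIdeal (Localization.AtPrime 𝔭),
      ⟨hmaxne, inferInstance⟩, fun P hP => huniq P hP⟩
  obtain ⟨ϖ, hirr⟩ := IsDiscreteValuationRing.exists_irreducible (Localization.AtPrime 𝔭)
  obtain ⟨nx, u, hxu⟩ := IsDiscreteValuationRing.eq_unit_mul_pow_irreducible hxb hirr
  obtain ⟨nt, v, htv⟩ := IsDiscreteValuationRing.eq_unit_mul_pow_irreducible htb hirr
  have hnt : 1 ≤ nt := by
    rcases Nat.eq_zero_or_pos nt with h0 | h; swap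
    · exact h
    exfalso
    rw [h0, pow_zero, mul_one] at htv
    rw [htv] at htmem
    exact (IsLocalRing.mem_maximalIdeal _).mp htmem (by exact v.isUnit)
  have key : (algebraMap R (Localization.AtPrime 𝔭) x) ^ nt * ↑(v ^ nx)
      = (algebraMap R (Localization.AtPrime 𝔭) t) ^ nx * ↑(u ^ nt) := by
    rw [hxu, htv, mul_pow, mul_pow, ← pow_mul, ← pow_mul, Nat.mul_comm nx nt,
      Units.val_pow_eq_pow_val, Units.val_pow_eq_pow_val]
    ring
  obtain ⟨⟨a₁, s₁⟩, hv1⟩ := IsLocalization.surj (M := 𝔭.primeCompl)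
    ((v ^ nx : (Localization.AtPrime 𝔭)ˣ) : Localization.AtPrime 𝔭)
  obtain ⟨⟨a₂, s₂⟩, hu2⟩ := IsLocalization.surj (M := 𝔭.primeCompl)
    ((u ^ nt : (Localization.AtPrime 𝔭)ˣ) : Localization.AtPrime 𝔭)
  simp only at hv1 hu2
  have ha₂ : a₂ ∉ 𝔭 := by
    intro hmem
    have h1 : ((u ^ nt : (Localization.AtPrime 𝔭)ˣ) : Localization.AtPrime 𝔭)
        * algebraMap R (Localization.AtPrime 𝔭) s₂ ∈
        IsLocalRing.maximalIdeal (Localization.AtPrime 𝔭) := by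
      rw [hu2]
      exact hmax ▸ Ideal.mem_map_of_mem _ hmem
    have h2 : algebraMap R (Localization.AtPrime 𝔭) s₂ ∈
        IsLocalRing.maximalIdeal (Localization.AtPrime 𝔭) := by
      have := Ideal.mul_mem_left _ (((u ^ nt)⁻¹ : (Localization.AtPrime 𝔭)ˣ) :
        Localization.AtPrime 𝔭) h1
      rwa [← mul_assoc, Units.inv_mul, one_mul] at this
    have := Ideal.mem_comap.mpr h2
    rw [show Ideal.comap (algebraMap R (Localization.AtPrime 𝔭)) (IsLocalRing.maximalIdeal (Localization.AtPrime 𝔭)) = 𝔭 from Localization.AtPrime.comap_maximalIdeal (I := 𝔭)] at this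
    exact s₂.2 this
  have hc₂ : a₂ * (s₁ : R) ∉ 𝔭 := fun hmem =>
    (h𝔭p.mem_or_mem hmem).elim ha₂ s₁.2
  refine ⟨nt, nx, a₁ * s₂, a₂ * s₁, hnt, hc₂, hinj ?_⟩
  calc algebraMap R (Localization.AtPrime 𝔭) (x ^ nt * (a₁ * s₂))
      = (algebraMap R (Localization.AtPrime 𝔭) x) ^ nt
        * ((v ^ nx : (Localization.AtPrime 𝔭)ˣ) : Localization.AtPrime 𝔭)
        * (algebraMap R (Localization.AtPrime 𝔭) s₁
          * algebraMap R (Localization.AtPrime 𝔭) s₂) := by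
        rw [map_mul, map_pow, map_mul, ← hv1]; ring
    _ = (algebraMap R (Localization.AtPrime 𝔭) t) ^ nx
        * ((u ^ nt : (Localization.AtPrime 𝔭)ˣ) : Localization.AtPrime 𝔭)
        * (algebraMap R (Localization.AtPrime 𝔭) s₁
          * algebraMap R (Localization.AtPrime 𝔭) s₂) := by rw [key]
    _ = algebraMap R (Localization.AtPrime 𝔭) (t ^ nx * (a₂ * s₁)) := by
        rw [map_mul, map_pow, map_mul, ← hu2]; ring

end DVR

section Main
variable {p : ℕ} [Fact p.Prime] {R : Type*} [CommRing R] [IsDomain R] [CharP R p]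
  [IsNoetherianRing R] {𝔭 : Ideal R}

theorem forward_le (hff : FFinite p R) (h : PurelyFRegularAlong p 𝔭)
    (q : Ideal R) [q.IsPrime] (hle : 𝔭 ≤ q) :
    PurelyFRegularAlong p (𝔭.map (algebraMap R (Localization.AtPrime q))) := by
  intro c' hc'
  obtain ⟨⟨x, s⟩, hxs⟩ := IsLocalization.surj (M := q.primeCompl) c'
  simp only at hxs
  have hx : x ∉ 𝔭 := by
    intro hx
    apply hc'
    have hu : IsUnit (algebraMap R (Localization.AtPrime q) (s : R)) :=
      IsLocalization.map_units _ s
    have hc'eq : c' = algebraMap R (Localization.AtPrime q) x * ↑hu.unit⁻¹ := by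
      rw [← hxs, mul_assoc, IsUnit.mul_val_inv, mul_one]
    rw [hc'eq]
    exact Ideal.mul_mem_right _ _ (Ideal.mem_map_of_mem _ hx)
  obtain ⟨e, he, φ, hφ, hcomp, hval⟩ := h x hx
  obtain ⟨ψ, hψ, hcomm⟩ := exists_localized p e (Localization.AtPrime q) q.primeCompl φ hφ
  refine ⟨e, he, ψ.comp (AddMonoidHom.mulLeft (algebraMap R (Localization.AtPrime q) (s : R))),
    pl_comp_mulLeft _ hψ, ?_, ?_⟩
  · intro z hz
    show ψ (algebraMap R (Localization.AtPrime q) (s : R) * z) ∈ _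
    exact localized_compat hψ hcomm hcomp _ (Ideal.mul_mem_left _ _ hz)
  · show ψ (algebraMap R (Localization.AtPrime q) (s : R) * c') = 1
    rw [mul_comm, hxs, hcomm, hval, map_one]

theorem forward_nle [IsIntegrallyClosed R] (hff : FFinite p R)
    (h𝔭 : 𝔭.IsPrime ∧ 𝔭 ≠ ⊥ ∧ ∀ q : Ideal R, q.IsPrime → q < 𝔭 → q = ⊥)
    (h : PurelyFRegularAlong p 𝔭) (q : Ideal R) [q.IsPrime] (hnle : ¬ 𝔭 ≤ q) :
    StronglyFRegular p (Localization.AtPrime q) := by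
  obtain ⟨t, ht𝔭, htq⟩ := SetLike.not_le_iff_exists.mp hnle
  have ht0 : t ≠ 0 := fun h0 => htq (h0 ▸ q.zero_mem)
  intro c' hc'
  obtain ⟨⟨x, s⟩, hxs⟩ := IsLocalization.surj (M := q.primeCompl) c'
  simp only at hxs
  have hsu : IsUnit (algebraMap R (Localization.AtPrime q) (s : R)) :=
    IsLocalization.map_units _ s
  have hx0 : x ≠ 0 := by
    intro h0
    apply hc'
    rw [h0, map_zero] at hxs
    rcases mul_eq_zero.mp hxs with h' | h'
    · exact h'
    · exact absurd h' hsu.ne_zero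
  obtain ⟨m, n, c₁, c₂, hm, hc₂, heq⟩ := dvr_factor h𝔭 hx0 ht𝔭 ht0
  obtain ⟨e, he, φ, hφ, hcomp, hval⟩ := h c₂ hc₂
  obtain ⟨ψ, hψ, hcomm⟩ := exists_localized p e (Localization.AtPrime q) q.primeCompl φ hφ
  have htu : IsUnit (algebraMap R (Localization.AtPrime q) t) :=
    IsLocalization.map_units (Localization.AtPrime q) (⟨t, htq⟩ : q.primeCompl)
  set r : Localization.AtPrime q :=
    algebraMap R (Localization.AtPrime q) (s : R)
      * (algebraMap R (Localization.AtPrime q) x) ^ (m - 1)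
      * algebraMap R (Localization.AtPrime q) c₁
      * (↑htu.unit⁻¹ : Localization.AtPrime q) ^ n with hrdef
  refine ⟨e, he, ψ.comp (AddMonoidHom.mulLeft r), pl_comp_mulLeft _ hψ, ?_⟩
  show ψ (r * c') = 1
  have hm1 : m - 1 + 1 = m := Nat.succ_pred_eq_of_pos hm
  have hr : r * c' = algebraMap R (Localization.AtPrime q) c₂ := by
    calc r * c'
        = (algebraMap R (Localization.AtPrime q) x) ^ (m - 1)
          * algebraMap R (Localization.AtPrime q) c₁
          * (↑htu.unit⁻¹ : Localization.AtPrime q) ^ n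
          * (c' * algebraMap R (Localization.AtPrime q) (s : R)) := by
          rw [hrdef]; ring
      _ = (algebraMap R (Localization.AtPrime q) x) ^ (m - 1 + 1)
          * algebraMap R (Localization.AtPrime q) c₁
          * (↑htu.unit⁻¹ : Localization.AtPrime q) ^ n := by
          rw [hxs]; ring
      _ = algebraMap R (Localization.AtPrime q) (x ^ m * c₁)
          * (↑htu.unit⁻¹ : Localization.AtPrime q) ^ n := by
          rw [hm1, map_mul, map_pow]
      _ = algebraMap R (Localization.AtPrime q) (t ^ n * c₂)
          * (↑htu.unit⁻¹ : Localization.AtPrime q) ^ n := by rw [heq]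
      _ = algebraMap R (Localization.AtPrime q) c₂
          * (algebraMap R (Localization.AtPrime q) t
            * (↑htu.unit⁻¹ : Localization.AtPrime q)) ^ n := by
          rw [map_mul, map_pow, mul_pow]; ring
      _ = algebraMap R (Localization.AtPrime q) c₂ := by
          rw [IsUnit.mul_val_inv, one_pow, mul_one]
  rw [hr, hcomm, hval, map_one]

/-- From local hypotheses, at every prime there is a compatible global map not vanishing at `c`. -/
theorem local_to_nonvanish (hff : FFinite p R) (h𝔭p : 𝔭.IsPrime) (c : R) (hc : c ∉ 𝔭)
    (h1 : ∀ (q : Ideal R) [q.IsPrime], 𝔭 ≤ q →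
      PurelyFRegularAlong p (𝔭.map (algebraMap R (Localization.AtPrime q))))
    (h2 : ∀ (q : Ideal R) [q.IsPrime], ¬ 𝔭 ≤ q →
      StronglyFRegular p (Localization.AtPrime q))
    (q : Ideal R) [q.IsPrime] :
    ∃ e, 1 ≤ e ∧ ∃ φ : R →+ R, IsPLinearMap p e φ ∧ (∀ y ∈ 𝔭, φ y ∈ 𝔭) ∧ φ c ∉ q := by
  by_cases hle : 𝔭 ≤ q
  · have hdisj : Disjoint (q.primeCompl : Set R) (𝔭 : Set R) :=
      Set.disjoint_left.mpr fun a ha ha' => ha (hle ha')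
    have hcm : algebraMap R (Localization.AtPrime q) c ∉
        𝔭.map (algebraMap R (Localization.AtPrime q)) := by
      intro hmem
      have h' := Ideal.mem_comap.mpr hmem
      rw [show Ideal.comap (algebraMap R (Localization.AtPrime q)) (𝔭.map (algebraMap R (Localization.AtPrime q))) = 𝔭 from IsLocalization.comap_map_of_isPrime_disjoint q.primeCompl
        (Localization.AtPrime q) h𝔭p hdisj] at h'
      exact hc h'
    obtain ⟨e, he, ψ, hψ, hcompat, hval⟩ := h1 q hle _ hcm
    obtain ⟨φ, hφ, hcomp, hval'⟩ := descend_le hff h𝔭p hle c hψ hval hcompat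
    exact ⟨e, he, φ, hφ, hcomp, hval'⟩
  · obtain ⟨t, ht𝔭, htq⟩ := SetLike.not_le_iff_exists.mp hle
    have hc0 : c ≠ 0 := fun h0 => hc (h0 ▸ 𝔭.zero_mem)
    have hcm : algebraMap R (Localization.AtPrime q) c ≠ 0 := fun h0 =>
      hc0 (IsLocalization.injective (Localization.AtPrime q)
        q.primeCompl_le_nonZeroDivisors (by rw [h0, map_zero]))
    obtain ⟨e, he, ψ, hψ, hval⟩ := h2 q hle _ hcm
    obtain ⟨φ, hφ, hcomp, hval'⟩ := descend_nle hff c ht𝔭 htq hψ hval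
    exact ⟨e, he, φ, hφ, hcomp, hval'⟩

theorem backward (hff : FFinite p R) (h𝔭p : 𝔭.IsPrime)
    (h1 : ∀ (q : Ideal R) [q.IsPrime], 𝔭 ≤ q →
      PurelyFRegularAlong p (𝔭.map (algebraMap R (Localization.AtPrime q))))
    (h2 : ∀ (q : Ideal R) [q.IsPrime], ¬ 𝔭 ≤ q →
      StronglyFRegular p (Localization.AtPrime q)) :
    PurelyFRegularAlong p 𝔭 := by
  have hp : p.Prime := Fact.out
  -- step 1 : a level-one compatible splitting
  have hone : (1 : R) ∉ 𝔭 := fun hmem => h𝔭p.ne_top (Ideal.eq_top_iff_one 𝔭 |>.mpr hmem)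
  have lower : ∀ (c : R), c ∉ 𝔭 → ∀ (q : Ideal R), q.IsPrime →
      ∃ e, 1 ≤ e ∧ ∃ φ : R →+ R, IsPLinearMap p e φ ∧ (∀ y ∈ 𝔭, φ y ∈ 𝔭) ∧ φ c ∉ q := by
    intro c hc q hq
    exact local_to_nonvanish hff h𝔭p c hc h1 h2 q
  have hsplit : ∃ σ : R →+ R, IsPLinearMap p 1 σ ∧ (∀ y ∈ 𝔭, σ y ∈ 𝔭) ∧ σ 1 = 1 := by
    have hne : ∀ (q : Ideal R), q.IsMaximal → ¬ (splitIdeal p 1 𝔭 (1 : R) ≤ q) := by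
      intro q hqmax hqle
      haveI := hqmax.isPrime
      obtain ⟨e, he, φ, hφ, hcomp, hval⟩ := lower 1 hone q inferInstance
      have hk : 1 + (e - 1) = e := by omega
      have hτ := pl_comp_frob hφ (e - 1) hk
      have hτc : ∀ y ∈ 𝔭, (φ.comp (iterateFrobenius R p (e - 1)).toAddMonoidHom) y ∈ 𝔭 := by
        intro y hy
        show φ (iterateFrobenius R p (e - 1) y) ∈ 𝔭
        rw [iterateFrobenius_def]
        exact hcomp _ (Ideal.pow_mem_of_mem 𝔭 hy _ (pow_pos hp.pos _))
      have hmem : (φ.comp (iterateFrobenius R p (e - 1)).toAddMonoidHom) 1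
          ∈ splitIdeal p 1 𝔭 (1 : R) := ⟨_, hτ, hτc, rfl⟩
      have hτ1 : (φ.comp (iterateFrobenius R p (e - 1)).toAddMonoidHom) 1 = φ 1 := by
        show φ (iterateFrobenius R p (e - 1) 1) = φ 1
        rw [map_one]
      exact hval (hτ1 ▸ hqle hmem)
    have htop : splitIdeal p 1 𝔭 (1 : R) = ⊤ := by
      by_contra hne'
      obtain ⟨m, hm, hlem⟩ := Ideal.exists_le_maximal _ hne'
      exact hne m hm hlem
    have h1mem : (1 : R) ∈ splitIdeal p 1 𝔭 (1 : R) := htop ▸ Submodule.mem_top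
    exact h1mem
  obtain ⟨σ, hσ, hσc, hσ1⟩ := hsplit
  -- step 2 : splittings at all levels
  have hsplitf : ∀ f, 1 ≤ f →
      ∃ τ : R →+ R, IsPLinearMap p f τ ∧ (∀ y ∈ 𝔭, τ y ∈ 𝔭) ∧ τ 1 = 1 := by
    intro f hf
    induction f, hf using Nat.le_induction with
    | base => exact ⟨σ, hσ, hσc, hσ1⟩
    | succ n hn ih =>
      obtain ⟨τ, hτ, hτc, hτ1⟩ := ih
      refine ⟨τ.comp σ, pl_comp hτ hσ, fun y hy => hτc _ (hσc y hy), ?_⟩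
      show τ (σ 1) = 1
      rw [hσ1, hτ1]
  -- step 3 : main argument
  intro c hc
  have hmono : Monotone (fun n => splitIdeal p (n + 1) 𝔭 c) := by
    intro a b hab
    rcases eq_or_lt_of_le hab with rfl | hlt
    · exact le_refl _
    have hf : 1 ≤ b - a := by omega
    obtain ⟨τ, hτ, hτc, hτ1⟩ := hsplitf (b - a) hf
    rintro x ⟨φ, hφ, hcomp, rfl⟩
    have hpl : IsPLinearMap p (a + 1 + (b - a))
        (φ.comp (τ.comp (AddMonoidHom.mulLeft (c ^ (p ^ (b - a) - 1))))) :=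
      pl_comp hφ (pl_comp_mulLeft _ hτ)
    have hE : a + 1 + (b - a) = b + 1 := by omega
    rw [hE] at hpl
    refine ⟨_, hpl, ?_, ?_⟩
    · intro y hy
      exact hcomp _ (hτc _ (Ideal.mul_mem_left _ _ hy))
    · show φ (τ (c ^ (p ^ (b - a) - 1) * c)) = φ c
      have h1 : p ^ (b - a) - 1 + 1 = p ^ (b - a) :=
        Nat.succ_pred_eq_of_pos (pow_pos hp.pos _)
      have h2 : c ^ (p ^ (b - a) - 1) * c = c ^ p ^ (b - a) * 1 := by
        rw [mul_one, ← pow_succ, h1]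
      rw [h2, hτ c 1, hτ1, mul_one]
  let J : ℕ →o Ideal R := ⟨fun n => splitIdeal p (n + 1) 𝔭 c, hmono⟩
  obtain ⟨N, hN⟩ := monotone_stabilizes_iff_noetherian.mpr inferInstance J
  have hJtop : J N = ⊤ := by
    by_contra h'
    obtain ⟨mI, hm, hlem⟩ := Ideal.exists_le_maximal _ h'
    haveI := hm.isPrime
    obtain ⟨e, he, φ, hφ, hcomp, hval⟩ := lower c hc mI inferInstance
    have hmem : φ c ∈ J (e - 1) := by
      show φ c ∈ splitIdeal p (e - 1 + 1) 𝔭 c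
      have hE : e - 1 + 1 = e := by omega
      rw [hE]
      exact ⟨φ, hφ, hcomp, rfl⟩
    have hle2 : J (e - 1) ≤ J N := by
      have hmax := J.monotone (le_max_left (e - 1) N)
      rwa [← hN (max (e - 1) N) (le_max_right _ _)] at hmax
    exact hval (hlem (hle2 hmem))
  have h1J : (1 : R) ∈ J N := hJtop ▸ Submodule.mem_top
  obtain ⟨φ, hφ, hcomp, hval⟩ := h1J
  exact ⟨N + 1, by omega, φ, hφ, hcomp, hval⟩

end Main

end PF

/-- Pure F-regularity along a height-one prime is a local condition: it holds iff the pair is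
purely F-regular at all primes containing `𝔭` and the ring is strongly F-regular at all other
primes. -/

theorem purelyFRegular_iff_local (p : ℕ) (hp : p.Prime)
    (R : Type*) [CommRing R] [IsDomain R] [IsNoetherianRing R] [IsIntegrallyClosed R]
    [CharP R p] (hff : FFinite p R)
    (𝔭 : Ideal R) (h𝔭 : IsHeightOnePrime 𝔭) :
    PurelyFRegularAlong p 𝔭 ↔
      ((∀ (q : Ideal R) [q.IsPrime], 𝔭 ≤ q →
        PurelyFRegularAlong p (𝔭.map (algebraMap R (Localization.AtPrime q)))) ∧
      (∀ (q : Ideal R) [q.IsPrime], ¬ 𝔭 ≤ q →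
        StronglyFRegular p (Localization.AtPrime q))) := by
  haveI := Fact.mk hp
  obtain ⟨h𝔭p, h𝔭0, h𝔭ht⟩ := h𝔭
  constructor
  · intro h
    exact ⟨fun q _ hle => PF.forward_le hff h q hle,
      fun q _ hnle => PF.forward_nle hff ⟨h𝔭p, h𝔭0, h𝔭ht⟩ h q hnle⟩
  · rintro ⟨h1, h2⟩
    exact PF.backward hff h𝔭p h1 h2
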